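/- Let G be a non-abelian finite p-group and M a central subgroup of G. If G has nilpotency class 2, γ₂(G) ≤ M, and M is cyclic, then Aut^M_{Z(G)}(G) = Inn(G). -/

import Mathlib

private lemma card_hom_zmod_le {C : Type*} [CommGroup C] [Finite C] [IsCyclic C]
    {n : ℕ} (hn : 0 < n) : Nat.card (Multiplicative (ZMod n) →* C) ≤ n := by
  classical
  haveI : NeZero n := ⟨hn.ne'⟩
  haveI : Fintype C := Fintype.ofFinite C
  have hpow : ∀ φ : Multiplicative (ZMod n) →* C,
      (φ (Multiplicative.ofAdd (1 : ZMod n))) ^ n = 1 := by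
    intro φ
    rw [← map_pow]
    have h1 : (Multiplicative.ofAdd (1 : ZMod n)) ^ n = 1 := by
      rw [← ofAdd_nsmul]
      simp [nsmul_eq_mul]
    rw [h1, map_one]
  have hinj : Function.Injective
      (fun φ : Multiplicative (ZMod n) →* C =>
        (⟨φ (Multiplicative.ofAdd (1 : ZMod n)), hpow φ⟩ : {c : C // c ^ n = 1})) := by
    intro φ ψ h
    have h' : φ (Multiplicative.ofAdd (1 : ZMod n)) = ψ (Multiplicative.ofAdd (1 : ZMod n)) :=
      congrArg Subtype.val h
    refine MonoidHom.ext fun x => ?_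
    have hx : x = (Multiplicative.ofAdd (1 : ZMod n)) ^ (ZMod.val x.toAdd) := by
      rw [← ofAdd_nsmul]
      simp only [nsmul_eq_mul, mul_one]
      rw [ZMod.natCast_rightInverse x.toAdd]
      rfl
    rw [hx, map_pow, map_pow, h']
  calc Nat.card (Multiplicative (ZMod n) →* C)
      ≤ Nat.card {c : C // c ^ n = 1} := Nat.card_le_card_of_injective _ hinj
    _ ≤ n := by
        rw [Nat.card_eq_fintype_card, Fintype.card_subtype]
        exact IsCyclic.card_pow_eq_one_le hn

private lemma card_monoidHom_le (A C : Type*) [CommGroup A] [Finite A] [CommGroup C]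
    [Finite C] [IsCyclic C] : Nat.card (A →* C) ≤ Nat.card A := by
  classical
  obtain ⟨ι, hι, n, hn, ⟨e⟩⟩ := CommGroup.equiv_prod_multiplicative_zmod_of_finite A
  have e1 : (A →* C) ≃ ((i : ι) → (Multiplicative (ZMod (n i)) →* C)) :=
    ((MulEquiv.monoidHomCongrLeft e).trans
      (Pi.monoidHomMulEquiv _ C)).toEquiv
  rw [Nat.card_congr e1, Nat.card_congr e.toEquiv, Nat.card_pi, Nat.card_pi]
  refine Finset.prod_le_prod (fun i _ => Nat.zero_le _) (fun i _ => ?_)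
  have hcard : Nat.card (Multiplicative (ZMod (n i))) = n i := by
    rw [Nat.card_congr Multiplicative.ofAdd.symm, Nat.card_zmod]
  rw [hcard]
  exact card_hom_zmod_le (lt_trans one_pos (hn i))

/-- If G is a non-abelian finite p-group of class 2, M ≤ Z(G) with γ₂(G) ≤ M and M
cyclic, then Aut^M_{Z(G)}(G) = Inn(G). -/
theorem stmt7 {p : ℕ} [Fact p.Prime] {G : Type*} [Group G] [Finite G]
    (hp : IsPGroup p G) (hna : ¬ ∀ a b : G, a * b = b * a)
    (M : Subgroup G) (hM : M ≤ Subgroup.center G)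
    (h2 : commutator G ≤ Subgroup.center G)
    (hγ : commutator G ≤ M) (hcyc : IsCyclic ↥M) :
    {α : MulAut G | (∀ x : G, x⁻¹ * α x ∈ M) ∧ ∀ z ∈ Subgroup.center G, α z = z}
      = Set.range (fun g : G => MulAut.conj g) := by
  classical
  haveI : Finite (MulAut G) :=
    Finite.of_injective (fun (e : MulAut G) => (e : G → G)) (fun a b h => by
      ext x; exact congrFun h x)
  set S : Set (MulAut G) :=
    {α : MulAut G | (∀ x : G, x⁻¹ * α x ∈ M) ∧ ∀ z ∈ Subgroup.center G, α z = z} with hS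
  -- Inner automorphisms belong to S
  have hsub : Set.range (fun g : G => MulAut.conj g) ⊆ S := by
    rintro _ ⟨g, rfl⟩
    refine ⟨fun x => ?_, fun z hz => ?_⟩
    · open commutatorElement in
      have hx : x⁻¹ * (MulAut.conj g x) = ⁅x⁻¹, g⁆ := by
        simp only [MulAut.conj_apply, commutatorElement_def, inv_inv]
        group
      rw [hx]
      exact hγ (Subgroup.commutator_mem_commutator (Subgroup.mem_top _) (Subgroup.mem_top _))
    · have hzz := (Subgroup.mem_center_iff.mp hz g)
      simp only [MulAut.conj_apply]
      rw [hzz, mul_assoc, mul_inv_cancel, mul_one]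
  -- the commutative group structures
  letI instCM : CommGroup ↥M :=
    { (inferInstance : Group ↥M) with
      mul_comm := fun a b => Subtype.ext (Subgroup.mem_center_iff.mp (hM b.2) ↑a) }
  haveI : IsCyclic ↥M := hcyc
  letI instCQ : CommGroup (G ⧸ Subgroup.center G) :=
    { (inferInstance : Group (G ⧸ Subgroup.center G)) with
      mul_comm := by
        intro a b
        induction a using QuotientGroup.induction_on with
        | H x =>
        induction b using QuotientGroup.induction_on with
        | H y =>
        rw [← QuotientGroup.mk_mul, ← QuotientGroup.mk_mul, QuotientGroup.eq]
        open commutatorElement in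
        have hxy : (x * y)⁻¹ * (y * x) = ⁅y⁻¹, x⁻¹⁆ := by
          simp only [commutatorElement_def, inv_inv]
          group
        rw [hxy]
        exact h2 (Subgroup.commutator_mem_commutator
          (Subgroup.mem_top _) (Subgroup.mem_top _)) }
  -- the map from S to Hom(G/Z, M)
  have hker : (MulAut.conj : G →* MulAut G).ker = Subgroup.center G := by
    ext g
    simp only [MonoidHom.mem_ker, Subgroup.mem_center_iff]
    constructor
    · intro h x
      have hx : g * x * g⁻¹ = x := by
        have := congrArg (fun (e : MulAut G) => e x) h
        simpa [MulAut.conj_apply] using this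
      calc x * g = (g * x * g⁻¹) * g := by rw [hx]
        _ = g * x := by group
    · intro h
      ext x
      simp only [MulAut.conj_apply]
      rw [← h x, mul_assoc, mul_inv_cancel, mul_one]
      rfl
  -- homomorphism attached to α ∈ S
  have mkhom : ∀ α : ↥S, ∃ f : (G ⧸ Subgroup.center G) →* ↥M,
      ∀ x : G, ((f (x : G ⧸ Subgroup.center G) : G)) = x⁻¹ * (α : MulAut G) x := by
    rintro ⟨α, hα1, hα2⟩
    have hcen : ∀ x w : G, w * (x⁻¹ * α x) = (x⁻¹ * α x) * w := fun x w =>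
      Subgroup.mem_center_iff.mp (hM (hα1 x)) w
    let f₀ : G →* ↥M :=
      { toFun := fun x => ⟨x⁻¹ * α x, hα1 x⟩
        map_one' := by ext; simp
        map_mul' := by
          intro x y
          ext
          show (x * y)⁻¹ * α (x * y) = (x⁻¹ * α x) * (y⁻¹ * α y)
          rw [map_mul, mul_inv_rev]
          calc y⁻¹ * x⁻¹ * (α x * α y) = (y⁻¹ * (x⁻¹ * α x)) * α y := by group
            _ = ((x⁻¹ * α x) * y⁻¹) * α y := by rw [hcen x y⁻¹]
            _ = (x⁻¹ * α x) * (y⁻¹ * α y) := by group }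
    have hk : Subgroup.center G ≤ f₀.ker := by
      intro z hz
      have : α z = z := hα2 z hz
      simp only [MonoidHom.mem_ker]
      ext
      show z⁻¹ * α z = 1
      rw [this, inv_mul_cancel]
    exact ⟨QuotientGroup.lift _ f₀ hk, fun x => by
      rw [QuotientGroup.lift_mk]
      rfl⟩
  choose F hF using mkhom
  have hFinj : Function.Injective F := by
    intro α β h
    apply Subtype.ext
    apply MulEquiv.ext
    intro x
    have h1 := hF α x
    have h2 := hF β x
    rw [h] at h1
    have := h1.symm.trans h2
    exact mul_left_cancel this
  -- cardinality comparison
  haveI : Finite ((G ⧸ Subgroup.center G) →* ↥M) :=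
    Finite.of_injective (fun f => (f : (G ⧸ Subgroup.center G) → ↥M))
      DFunLike.coe_injective
  have hcard1 : Nat.card ↥S ≤ Nat.card (G ⧸ Subgroup.center G) :=
    (Nat.card_le_card_of_injective F hFinj).trans
      (card_monoidHom_le (G ⧸ Subgroup.center G) ↥M)
  have hcard2 : Nat.card (G ⧸ Subgroup.center G)
      = Nat.card ↥(Set.range (fun g : G => MulAut.conj g)) := by
    have e1 : (G ⧸ Subgroup.center G) ≃* (MulAut.conj : G →* MulAut G).range :=
      (QuotientGroup.quotientMulEquivOfEq hker.symm).trans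
        (QuotientGroup.quotientKerEquivRange _)
    exact Nat.card_congr (e1.toEquiv.trans (Equiv.subtypeEquivRight (fun x => Iff.rfl)))
  refine (Set.eq_of_subset_of_ncard_le hsub ?_ (Set.toFinite _)).symm
  rw [← Nat.card_coe_set_eq, ← Nat.card_coe_set_eq]
  calc Nat.card ↥S ≤ Nat.card (G ⧸ Subgroup.center G) := hcard1
    _ = _ := hcard2
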